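/- Let A be a 2×2 expanding integer matrix with characteristic polynomial f(x) = x² + 4x + 4, and let 𝒟 = {0, 1, 2, 4}v where v ∈ ℤ² is such that {v, Av} is linearly independent over ℝ. Then v = −2A^{−1}v + 2A^{−2}v + 2A^{−3}v − 2A^{−4}v + 2A^{−5}v − 2A^{−6}v + ⋯ ∈ T − T and 2v = −4A^{−1}v + 4A^{−2}v + 4A^{−3}v − 4A^{−4}v + 4A^{−5}v − 4A^{−6}v + ⋯ ∈ T − T; consequently the self-affine fractal T = T(A, 𝒟) is connected. -/

import Mathlib

open Matrix Polynomial Pointwise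

noncomputable section

/-- The real matrix obtained from a 2×2 integer matrix. -/
def toR (A : Matrix (Fin 2) (Fin 2) ℤ) : Matrix (Fin 2) (Fin 2) ℝ :=
  A.map (Int.cast : ℤ → ℝ)

/-- The real vector obtained from an integer vector. -/
def vecR (v : Fin 2 → ℤ) : Fin 2 → ℝ := fun j => (v j : ℝ)

/-- A 2×2 integer matrix is expanding if every complex eigenvalue has modulus > 1. -/
def IsExpanding (A : Matrix (Fin 2) (Fin 2) ℤ) : Prop :=
  ∀ z ∈ spectrum ℂ (A.map (Int.cast : ℤ → ℂ)), 1 < ‖z‖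

/-- The self-affine fractal `T(A, D v)`, i.e. the set of all sums
`∑_{i=1}^∞ A^{-i} (d_i v)` with digits `d_i ∈ D`. -/
def attractor (A : Matrix (Fin 2) (Fin 2) ℤ) (D : Set ℤ) (v : Fin 2 → ℤ) :
    Set (Fin 2 → ℝ) :=
  { x | ∃ d : ℕ → ℤ, (∀ i, d i ∈ D) ∧
      HasSum (fun i : ℕ => (d i : ℝ) • ((toR A)⁻¹ ^ (i + 1)).mulVec (vecR v)) x }


namespace S16

variable (A : Matrix (Fin 2) (Fin 2) ℤ) (v : Fin 2 → ℤ)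

def NN (A : Matrix (Fin 2) (Fin 2) ℤ) : Matrix (Fin 2) (Fin 2) ℝ :=
  toR A + (2:ℝ) • (1 : Matrix (Fin 2) (Fin 2) ℝ)

lemma hq (hchar : A.charpoly = X ^ 2 + C 4 * X + C 4) :
    toR A * toR A + (4:ℝ) • toR A + (4:ℝ) • (1 : Matrix (Fin 2) (Fin 2) ℝ) = 0 := by
  have h0 : aeval A A.charpoly = 0 := A.aeval_self_charpoly
  rw [hchar] at h0
  simp only [map_add, _root_.map_mul, map_pow, aeval_X, aeval_C] at h0
  have h1 := congrArg ((Int.castRingHom ℝ).mapMatrix :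
      Matrix (Fin 2) (Fin 2) ℤ →+* Matrix (Fin 2) (Fin 2) ℝ) h0
  simp only [map_add, _root_.map_mul, map_pow, map_zero] at h1
  have halg : ((Int.castRingHom ℝ).mapMatrix (algebraMap ℤ (Matrix (Fin 2) (Fin 2) ℤ) 4))
      = (4:ℝ) • (1 : Matrix (Fin 2) (Fin 2) ℝ) := by
    ext i j
    simp only [RingHom.mapMatrix_apply, Matrix.map_apply, Matrix.algebraMap_matrix_apply,
      Matrix.smul_apply, Matrix.one_apply]
    split <;> simp
  rw [halg] at h1
  have hM : (Int.castRingHom ℝ).mapMatrix A = toR A := rfl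
  rw [hM] at h1
  calc toR A * toR A + (4:ℝ) • toR A + (4:ℝ) • (1 : Matrix (Fin 2) (Fin 2) ℝ)
      = toR A ^ 2 + (4:ℝ) • (1 : Matrix (Fin 2) (Fin 2) ℝ) * toR A
        + (4:ℝ) • (1 : Matrix (Fin 2) (Fin 2) ℝ) := by
        rw [smul_mul_assoc, one_mul, pow_two]
    _ = 0 := h1

lemma hN2 (hchar : A.charpoly = X ^ 2 + C 4 * X + C 4) : NN A * NN A = 0 := by
  have h := hq A hchar
  have e : NN A * NN A
      = toR A * toR A + (4:ℝ) • toR A + (4:ℝ) • (1 : Matrix (Fin 2) (Fin 2) ℝ) := by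
    simp only [NN, add_mul, mul_add, smul_mul_assoc, mul_smul_comm, one_mul, mul_one,
      smul_smul]
    module
  rw [e, h]

lemma mulNN (N : Matrix (Fin 2) (Fin 2) ℝ) (x y a b : ℝ) :
    (x • (1 : Matrix (Fin 2) (Fin 2) ℝ) + y • N) * (a • 1 + b • N)
      = (x*a) • (1 : Matrix (Fin 2) (Fin 2) ℝ) + (x*b + y*a) • N + (y*b) • (N * N) := by
  simp only [add_mul, mul_add, smul_mul_assoc, mul_smul_comm, one_mul, mul_one, smul_smul]
  module

lemma hMrepr : toR A = (-2:ℝ) • (1 : Matrix (Fin 2) (Fin 2) ℝ) + (1:ℝ) • NN A := by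
  simp only [NN]
  module

lemma hB (hchar : A.charpoly = X ^ 2 + C 4 * X + C 4) :
    (toR A)⁻¹ = (-(1/2):ℝ) • (1 : Matrix (Fin 2) (Fin 2) ℝ) + (-(1/4):ℝ) • NN A := by
  apply Matrix.inv_eq_right_inv
  rw [show toR A = (-2:ℝ) • (1 : Matrix (Fin 2) (Fin 2) ℝ) + (1:ℝ) • NN A from hMrepr A,
    mulNN, hN2 A hchar]
  norm_num

lemma hBpow (hchar : A.charpoly = X ^ 2 + C 4 * X + C 4) (k : ℕ) :
    (toR A)⁻¹ ^ (k+1) = ((-(1/2):ℝ)^(k+1)) • (1 : Matrix (Fin 2) (Fin 2) ℝ)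
      + ((((k:ℝ)+1)/2) * (-(1/2):ℝ)^(k+1)) • NN A := by
  induction k with
  | zero => rw [pow_one, hB A hchar]; norm_num
  | succ k ih =>
      rw [pow_succ, ih, hB A hchar, mulNN, hN2 A hchar, smul_zero, add_zero]
      have e1 : ((-(1/2):ℝ)^(k+1)) * (-(1/2)) = (-(1/2):ℝ)^(k+1+1) := by ring
      push_cast
      rw [show ((-(1/2):ℝ)^(k+1+1)) = (-(1/2):ℝ)^(k+1) * (-(1/2)) from by ring]
      match_scalars <;> ring

lemma hBvec (hchar : A.charpoly = X ^ 2 + C 4 * X + C 4) (i : ℕ) :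
    ((toR A)⁻¹ ^ (i+1)).mulVec (vecR v)
      = ((-(1/2):ℝ)^(i+1)) • vecR v
        + ((((i:ℝ)+1)/2) * (-(1/2):ℝ)^(i+1)) • (NN A).mulVec (vecR v) := by
  rw [hBpow A hchar i, Matrix.add_mulVec, Matrix.smul_mulVec,
    Matrix.smul_mulVec, Matrix.one_mulVec]


lemma keyA (i : ℕ) : (2*(-1:ℝ)^i) * ((-(1/2):ℝ))^(i+1) = -((1/2:ℝ))^i := by
  have h1 : (-1:ℝ)^i * (-1:ℝ)^i = 1 := by rw [← mul_pow]; norm_num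
  rw [show ((-(1/2):ℝ))^(i+1) = (-1:ℝ)^(i+1) * (1/2:ℝ)^(i+1) from by rw [← mul_pow]; norm_num,
    pow_succ, pow_succ]
  linear_combination (-((1/2:ℝ)^i)) * h1

lemma keyB (i : ℕ) :
    (2*(-1:ℝ)^i) * (((i:ℝ)+1)/2 * (-(1/2):ℝ)^(i+1)) = -(((i:ℝ)+1)*(1/2:ℝ)^(i+1)) := by
  have h := keyA i
  linear_combination (((i:ℝ)+1)/2) * h

lemma sum1aux : HasSum (fun i : ℕ =>
    (if i = 0 then (1:ℝ) else if i = 1 then 1/2 else -((1/2)^i))) 1 := by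
  have hgeo : HasSum (fun i : ℕ => ((1/2:ℝ))^i) 2 := by
    have := hasSum_geometric_of_lt_one (r := (1/2:ℝ)) (by norm_num) (by norm_num)
    norm_num at this
    exact this
  have h := ((hgeo.neg.update 0 1).update 1 (1/2))
  have he : (Function.update (Function.update (fun i : ℕ => -((1/2:ℝ))^i) 0 1) 1 (1/2))
      = fun i : ℕ => (if i = 0 then (1:ℝ) else if i = 1 then 1/2 else -((1/2)^i)) := by
    funext i
    simp only [Function.update_apply]
    by_cases h0 : i = 0
    · subst h0; norm_num
    · by_cases h1 : i = 1
      · subst h1; norm_num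
      · simp [h0, h1]
  rw [he] at h
  norm_num [Function.update_apply] at h
  exact h

lemma shiftsum : HasSum (fun n : ℕ => ((n:ℝ)+1) * (1/2)^(n+1)) 2 := by
  have hc : HasSum (fun n : ℕ => (n:ℝ) * (1/2)^n) 2 := by
    have := hasSum_coe_mul_geometric_of_norm_lt_one (r := (1/2:ℝ)) (by norm_num [abs_of_pos])
    norm_num at this
    exact this
  have h2 : HasSum (fun n : ℕ => (((n+1 : ℕ)):ℝ) * (1/2)^(n+1)) 2 := by
    apply (hasSum_nat_add_iff (f := fun n : ℕ => (n:ℝ) * (1/2)^n) 1).mpr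
    simpa using hc
  simpa [Nat.cast_add] using h2

lemma sum2aux : HasSum (fun i : ℕ => (if i = 0 then (1/2:ℝ) else if i = 1 then 1/2
    else -((i+1)*(1/2)^(i+1)))) 0 := by
  have h := ((shiftsum.neg.update 0 (1/2)).update 1 (1/2))
  have he : (Function.update (Function.update
        (fun i : ℕ => -(((i:ℝ)+1) * (1/2)^(i+1))) 0 (1/2)) 1 (1/2))
      = fun i : ℕ => (if i = 0 then (1/2:ℝ) else if i = 1 then 1/2
          else -((i+1)*(1/2)^(i+1))) := by
    funext i
    simp only [Function.update_apply]
    by_cases h0 : i = 0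
    · subst h0; norm_num
    · by_cases h1 : i = 1
      · subst h1; norm_num
      · simp [h0, h1]
  rw [he] at h
  norm_num [Function.update_apply] at h
  exact h

lemma hsum1 (hchar : A.charpoly = X ^ 2 + C 4 * X + C 4) :
    HasSum (fun i : ℕ =>
        (if i = 0 then (-2 : ℝ) else if i = 1 then 2 else 2 * (-1 : ℝ) ^ i) •
          ((toR A)⁻¹ ^ (i + 1)).mulVec (vecR v)) (vecR v) := by
  set c1 : ℕ → ℝ := fun i => if i = 0 then (-2 : ℝ) else if i = 1 then 2 else 2 * (-1:ℝ)^i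
    with hc1
  have hα : HasSum (fun i : ℕ => c1 i * ((-(1/2):ℝ))^(i+1)) 1 := by
    have he : (fun i : ℕ => c1 i * ((-(1/2):ℝ))^(i+1))
        = fun i : ℕ => (if i = 0 then (1:ℝ) else if i = 1 then 1/2 else -((1/2)^i)) := by
      funext i
      by_cases h0 : i = 0
      · subst h0; norm_num [hc1]
      · by_cases h1 : i = 1
        · subst h1; norm_num [hc1]
        · simp only [hc1, h0, h1, if_false]
          exact keyA i
    rw [he]; exact sum1aux
  have hβ : HasSum (fun i : ℕ => c1 i * (((i:ℝ)+1)/2 * (-(1/2):ℝ)^(i+1))) 0 := by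
    have he : (fun i : ℕ => c1 i * (((i:ℝ)+1)/2 * (-(1/2):ℝ)^(i+1)))
        = fun i : ℕ => (if i = 0 then (1/2:ℝ) else if i = 1 then 1/2
            else -((i+1)*(1/2)^(i+1))) := by
      funext i
      by_cases h0 : i = 0
      · subst h0; norm_num [hc1]
      · by_cases h1 : i = 1
        · subst h1; norm_num [hc1]
        · simp only [hc1, h0, h1, if_false]
          exact keyB i
    rw [he]; exact sum2aux
  have hfe : (fun i : ℕ => c1 i • ((toR A)⁻¹ ^ (i + 1)).mulVec (vecR v))
      = fun i : ℕ => (c1 i * ((-(1/2):ℝ))^(i+1)) • vecR v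
          + (c1 i * (((i:ℝ)+1)/2 * (-(1/2):ℝ)^(i+1))) • (NN A).mulVec (vecR v) := by
    funext i
    rw [hBvec A v hchar i, smul_add, smul_smul, smul_smul]
  rw [show (fun i : ℕ =>
      (if i = 0 then (-2 : ℝ) else if i = 1 then 2 else 2 * (-1 : ℝ) ^ i) •
        ((toR A)⁻¹ ^ (i + 1)).mulVec (vecR v))
      = fun i : ℕ => c1 i • ((toR A)⁻¹ ^ (i + 1)).mulVec (vecR v) from rfl, hfe]
  have h := (hα.smul_const (vecR v)).add (hβ.smul_const ((NN A).mulVec (vecR v)))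
  simpa using h

lemma hsum2 (hchar : A.charpoly = X ^ 2 + C 4 * X + C 4) :
    HasSum (fun i : ℕ =>
        (if i = 0 then (-4 : ℝ) else if i = 1 then 4 else 4 * (-1 : ℝ) ^ i) •
          ((toR A)⁻¹ ^ (i + 1)).mulVec (vecR v)) ((2:ℝ) • vecR v) := by
  have h := (hsum1 A v hchar).const_smul (2:ℝ)
  have he : (fun i : ℕ => (2:ℝ) •
      ((if i = 0 then (-2 : ℝ) else if i = 1 then 2 else 2 * (-1 : ℝ) ^ i) •
        ((toR A)⁻¹ ^ (i + 1)).mulVec (vecR v)))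
      = fun i : ℕ =>
        (if i = 0 then (-4 : ℝ) else if i = 1 then 4 else 4 * (-1 : ℝ) ^ i) •
          ((toR A)⁻¹ ^ (i + 1)).mulVec (vecR v) := by
    funext i
    rw [smul_smul]
    congr 1
    by_cases h0 : i = 0
    · subst h0; norm_num
    · by_cases h1 : i = 1
      · subst h1; norm_num
      · simp only [h0, h1, if_false]; ring
  rw [← he]
  exact h

lemma summable_digits (hchar : A.charpoly = X ^ 2 + C 4 * X + C 4)
    (d : ℕ → ℤ) (hd : ∀ i, |d i| ≤ 4) :
    Summable (fun i : ℕ => ((d i : ℝ)) • ((toR A)⁻¹ ^ (i + 1)).mulVec (vecR v)) := by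
  have hfe : (fun i : ℕ => ((d i : ℝ)) • ((toR A)⁻¹ ^ (i + 1)).mulVec (vecR v))
      = fun i : ℕ => ((d i : ℝ) * ((-(1/2):ℝ))^(i+1)) • vecR v
          + ((d i : ℝ) * (((i:ℝ)+1)/2 * (-(1/2):ℝ)^(i+1))) • (NN A).mulVec (vecR v) := by
    funext i
    rw [hBvec A v hchar i, smul_add, smul_smul, smul_smul]
  rw [hfe]
  have habs : ∀ i : ℕ, |((-(1/2):ℝ))^(i+1)| = (1/2:ℝ)^(i+1) := by
    intro i
    rw [abs_pow]
    norm_num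
  have hd' : ∀ i, |(d i : ℝ)| ≤ 4 := by
    intro i
    have := hd i
    rw [show (4:ℝ) = ((4:ℤ):ℝ) from by norm_num, ← Int.cast_abs]
    exact_mod_cast this
  apply Summable.add
  · apply Summable.smul_const
    apply Summable.of_norm_bounded (g := fun i : ℕ => 4 * (1/2:ℝ)^(i+1))
    · have : Summable (fun i : ℕ => (1/2:ℝ)^(i+1)) := by
        apply (summable_geometric_of_lt_one (by norm_num) (by norm_num)).comp_injective
          (add_left_injective 1)
      exact this.mul_left 4
    · intro i
      rw [Real.norm_eq_abs, abs_mul, habs i]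
      exact mul_le_mul_of_nonneg_right (hd' i) (by positivity)
  · apply Summable.smul_const
    apply Summable.of_norm_bounded (g := fun i : ℕ => 2 * (((i:ℝ)+1) * (1/2:ℝ)^(i+1)))
    · exact shiftsum.summable.mul_left 2
    · intro i
      rw [Real.norm_eq_abs, abs_mul, abs_mul, habs i, abs_div]
      have h1 : |(i:ℝ)+1| = (i:ℝ)+1 := abs_of_pos (by positivity)
      rw [h1, abs_of_pos (show (0:ℝ) < 2 by norm_num)]
      have hb : (0:ℝ) ≤ ((i:ℝ)+1)/2 * (1/2:ℝ)^(i+1) := by positivity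
      calc |(d i : ℝ)| * (((i:ℝ)+1)/2 * (1/2:ℝ)^(i+1))
          ≤ 4 * (((i:ℝ)+1)/2 * (1/2:ℝ)^(i+1)) := mul_le_mul_of_nonneg_right (hd' i) hb
        _ = 2 * (((i:ℝ)+1) * (1/2:ℝ)^(i+1)) := by ring


lemma bound_of_mem {z : ℤ} (hz : z ∈ ({0,1,2,4} : Set ℤ)) : |z| ≤ 4 := by
  simp only [Set.mem_insert_iff, Set.mem_singleton_iff] at hz
  rcases hz with h|h|h|h <;> subst h <;> decide

lemma mem_of_digits (hchar : A.charpoly = X ^ 2 + C 4 * X + C 4)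
    (d : ℕ → ℤ) (hd : ∀ i, d i ∈ ({0,1,2,4} : Set ℤ)) :
    (∑' i : ℕ, ((d i : ℝ)) • ((toR A)⁻¹ ^ (i + 1)).mulVec (vecR v))
      ∈ attractor A {0,1,2,4} v :=
  ⟨d, hd, (summable_digits A v hchar d (fun i => bound_of_mem (hd i))).hasSum⟩

def d1 : ℕ → ℤ := fun i => if i = 0 then 0 else if i = 1 then 2 else if Even i then 2 else 0
def e1 : ℕ → ℤ := fun i => if i = 0 then 2 else if i = 1 then 0 else if Even i then 0 else 2

lemma d1mem : ∀ i, d1 i ∈ ({0,1,2,4} : Set ℤ) := by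
  intro i; unfold d1; split_ifs <;> simp
lemma e1mem : ∀ i, e1 i ∈ ({0,1,2,4} : Set ℤ) := by
  intro i; unfold e1; split_ifs <;> simp
lemma d2mem : ∀ i, 2 * d1 i ∈ ({0,1,2,4} : Set ℤ) := by
  intro i; unfold d1; split_ifs <;> simp
lemma e2mem : ∀ i, 2 * e1 i ∈ ({0,1,2,4} : Set ℤ) := by
  intro i; unfold e1; split_ifs <;> simp

lemma sub_d1e1 (i : ℕ) : ((d1 i : ℝ)) - ((e1 i : ℝ))
    = (if i = 0 then (-2:ℝ) else if i = 1 then 2 else 2*(-1:ℝ)^i) := by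
  unfold d1 e1
  by_cases h0 : i = 0
  · subst h0; norm_num
  · by_cases h1 : i = 1
    · subst h1; norm_num
    · rcases Nat.even_or_odd i with he | ho
      · simp [h0, h1, he, he.neg_one_pow]
      · simp [h0, h1, Nat.not_even_iff_odd.mpr ho, ho.neg_one_pow]

lemma sub_d2e2 (i : ℕ) : ((2 * d1 i : ℤ) : ℝ) - ((2 * e1 i : ℤ) : ℝ)
    = (if i = 0 then (-4:ℝ) else if i = 1 then 4 else 4*(-1:ℝ)^i) := by
  push_cast
  have h := sub_d1e1 i
  by_cases h0 : i = 0
  · subst h0; norm_num at h ⊢; linarith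
  · by_cases h1 : i = 1
    · subst h1; norm_num at h ⊢; linarith
    · simp only [h0, h1, if_false] at h ⊢; linarith

lemma mem1 (hchar : A.charpoly = X ^ 2 + C 4 * X + C 4) :
    vecR v ∈ attractor A {0,1,2,4} v - attractor A {0,1,2,4} v := by
  have hx := (summable_digits A v hchar d1 (fun i => bound_of_mem (d1mem i))).hasSum
  have hy := (summable_digits A v hchar e1 (fun i => bound_of_mem (e1mem i))).hasSum
  have hsub := hx.sub hy
  have he : (fun i : ℕ => ((d1 i : ℝ)) • ((toR A)⁻¹ ^ (i + 1)).mulVec (vecR v)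
        - ((e1 i : ℝ)) • ((toR A)⁻¹ ^ (i + 1)).mulVec (vecR v))
      = fun i : ℕ =>
        (if i = 0 then (-2 : ℝ) else if i = 1 then 2 else 2 * (-1 : ℝ) ^ i) •
          ((toR A)⁻¹ ^ (i + 1)).mulVec (vecR v) := by
    funext i
    rw [← sub_smul, sub_d1e1]
  rw [he] at hsub
  have hxy := (hsum1 A v hchar).unique hsub
  exact Set.mem_sub.mpr ⟨_, mem_of_digits A v hchar d1 d1mem,
    _, mem_of_digits A v hchar e1 e1mem, hxy.symm⟩

lemma mem2 (hchar : A.charpoly = X ^ 2 + C 4 * X + C 4) :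
    (2:ℝ) • vecR v ∈ attractor A {0,1,2,4} v - attractor A {0,1,2,4} v := by
  have hx := (summable_digits A v hchar (fun i => 2 * d1 i)
    (fun i => bound_of_mem (d2mem i))).hasSum
  have hy := (summable_digits A v hchar (fun i => 2 * e1 i)
    (fun i => bound_of_mem (e2mem i))).hasSum
  have hsub := hx.sub hy
  have he : (fun i : ℕ => (((2 * d1 i : ℤ) : ℝ)) • ((toR A)⁻¹ ^ (i + 1)).mulVec (vecR v)
        - (((2 * e1 i : ℤ) : ℝ)) • ((toR A)⁻¹ ^ (i + 1)).mulVec (vecR v))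
      = fun i : ℕ =>
        (if i = 0 then (-4 : ℝ) else if i = 1 then 4 else 4 * (-1 : ℝ) ^ i) •
          ((toR A)⁻¹ ^ (i + 1)).mulVec (vecR v) := by
    funext i
    rw [← sub_smul, sub_d2e2]
  rw [he] at hsub
  have hxy := (hsum2 A v hchar).unique hsub
  exact Set.mem_sub.mpr ⟨_, mem_of_digits A v hchar _ d2mem,
    _, mem_of_digits A v hchar _ e2mem, hxy.symm⟩


-- ## Connectedness machinery

/-- The contraction map of the IFS for digit `δ`. -/
def Fmap (δ : ℤ) (x : Fin 2 → ℝ) : Fin 2 → ℝ :=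
  (toR A)⁻¹.mulVec x + (δ:ℝ) • (toR A)⁻¹.mulVec (vecR v)

/-- `mulVec` by a fixed matrix, as a continuous linear map. -/
def LB (M : Matrix (Fin 2) (Fin 2) ℝ) : (Fin 2 → ℝ) →L[ℝ] (Fin 2 → ℝ) :=
  LinearMap.toContinuousLinearMap M.mulVecLin

@[simp] lemma LB_apply (M : Matrix (Fin 2) (Fin 2) ℝ) (x : Fin 2 → ℝ) :
    LB M x = M.mulVec x := rfl

lemma normB (hchar : A.charpoly = X ^ 2 + C 4 * X + C 4) (i : ℕ) (x : Fin 2 → ℝ) :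
    ‖((toR A)⁻¹ ^ (i+1)).mulVec x‖
      ≤ (1/2:ℝ)^(i+1) * ‖x‖ + (((i:ℝ)+1)/2 * (1/2)^(i+1)) * ‖(NN A).mulVec x‖ := by
  have h : ((toR A)⁻¹ ^ (i+1)).mulVec x
      = ((-(1/2):ℝ)^(i+1)) • x + ((((i:ℝ)+1)/2) * (-(1/2):ℝ)^(i+1)) • (NN A).mulVec x := by
    rw [hBpow A hchar i, Matrix.add_mulVec, Matrix.smul_mulVec,
      Matrix.smul_mulVec, Matrix.one_mulVec]
  rw [h]
  refine le_trans (norm_add_le _ _) ?_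
  rw [norm_smul, norm_smul]
  apply add_le_add
  · apply mul_le_mul_of_nonneg_right _ (norm_nonneg x)
    rw [Real.norm_eq_abs, abs_pow, abs_neg, abs_of_pos (show (0:ℝ) < 1/2 by norm_num)]
  · apply mul_le_mul_of_nonneg_right _ (norm_nonneg _)
    rw [Real.norm_eq_abs, abs_mul, abs_pow, abs_neg,
      abs_of_pos (show (0:ℝ) < 1/2 by norm_num),
      abs_of_pos (show (0:ℝ) < ((i:ℝ)+1)/2 by positivity)]

lemma summable_bound (c1 c2 : ℝ) :
    Summable (fun i : ℕ => (1/2:ℝ)^(i+1) * c1 + (((i:ℝ)+1)/2 * (1/2)^(i+1)) * c2) := by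
  apply Summable.add
  · have : Summable (fun i : ℕ => (1/2:ℝ)^(i+1)) :=
      (summable_geometric_of_lt_one (by norm_num) (by norm_num)).comp_injective
        (add_left_injective 1)
    exact this.mul_right c1
  · have h := shiftsum.summable.mul_right (c2/2)
    apply h.congr
    intro i
    ring

/-- The digit space. -/
abbrev Om := ℕ → ({0,1,2,4} : Set ℤ)

def Phi (d : Om) : Fin 2 → ℝ :=
  ∑' i : ℕ, (((d i : ℤ)) : ℝ) • ((toR A)⁻¹ ^ (i + 1)).mulVec (vecR v)

lemma Phi_cont (hchar : A.charpoly = X ^ 2 + C 4 * X + C 4) : Continuous (Phi A v) := by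
  have hDD : DiscreteTopology ({0,1,2,4} : Set ℤ) := by infer_instance
  refine TendstoUniformly.continuous (F := fun (t : Finset ℕ) (d : Om) =>
    ∑ i ∈ t, (((d i : ℤ)) : ℝ) • ((toR A)⁻¹ ^ (i + 1)).mulVec (vecR v))
    (p := (Filter.atTop : Filter (Finset ℕ))) ?_ ?_
  · apply tendstoUniformly_tsum
      (u := fun i : ℕ => 4 * ((1/2:ℝ)^(i+1) * ‖vecR v‖
        + (((i:ℝ)+1)/2 * (1/2)^(i+1)) * ‖(NN A).mulVec (vecR v)‖))
    · exact (summable_bound _ _).mul_left 4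
    · intro i d
      rw [norm_smul, Real.norm_eq_abs]
      have hd : |((d i : ℤ) : ℝ)| ≤ 4 := by
        have h4 : |(d i : ℤ)| ≤ 4 := bound_of_mem (d i).2
        rw [show (4:ℝ) = ((4:ℤ):ℝ) from by norm_num, ← Int.cast_abs]
        exact_mod_cast h4
      calc |((d i : ℤ) : ℝ)| * ‖((toR A)⁻¹ ^ (i + 1)).mulVec (vecR v)‖
          ≤ 4 * ‖((toR A)⁻¹ ^ (i + 1)).mulVec (vecR v)‖ :=
            mul_le_mul_of_nonneg_right hd (norm_nonneg _)
        _ ≤ _ := by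
            apply mul_le_mul_of_nonneg_left (normB A hchar i (vecR v)) (by norm_num)
  · refine Filter.Frequently.of_forall fun t => ?_
    apply continuous_finset_sum
    intro i _
    have h0 : Continuous (fun z : ({0,1,2,4} : Set ℤ) => ((z : ℤ) : ℝ)) :=
      continuous_of_discreteTopology
    have h1 : Continuous (fun d : Om => (((d i : ℤ)) : ℝ)) :=
      h0.comp (continuous_apply i)
    exact h1.smul continuous_const

lemma K_eq_range (hchar : A.charpoly = X ^ 2 + C 4 * X + C 4) :
    attractor A {0,1,2,4} v = Set.range (Phi A v) := by
  ext x
  constructor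
  · rintro ⟨d, hd, hs⟩
    refine ⟨fun i => ⟨d i, hd i⟩, ?_⟩
    have := hs.tsum_eq
    simpa [Phi] using this
  · rintro ⟨d, rfl⟩
    exact mem_of_digits A v hchar (fun i => (d i : ℤ)) (fun i => (d i).2)

lemma K_compact (hchar : A.charpoly = X ^ 2 + C 4 * X + C 4) :
    IsCompact (attractor A {0,1,2,4} v) := by
  rw [K_eq_range A v hchar]
  have : CompactSpace Om := by infer_instance
  exact isCompact_range (Phi_cont A v hchar)

lemma K_nonempty : (attractor A {0,1,2,4} v).Nonempty := by
  refine ⟨0, fun _ => 0, by simp, ?_⟩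
  have : (fun i : ℕ => ((0:ℤ) : ℝ) • ((toR A)⁻¹ ^ (i + 1)).mulVec (vecR v))
      = fun _ : ℕ => (0 : Fin 2 → ℝ) := by
    funext i; simp
  rw [this]
  exact hasSum_zero

lemma Fmap_mem (hchar : A.charpoly = X ^ 2 + C 4 * X + C 4) (δ : ℤ)
    (hδ : δ ∈ ({0,1,2,4} : Set ℤ)) {x : Fin 2 → ℝ} (hx : x ∈ attractor A {0,1,2,4} v) :
    Fmap A v δ x ∈ attractor A {0,1,2,4} v := by
  obtain ⟨d, hd, hs⟩ := hx
  set d' : ℕ → ℤ := fun i => if i = 0 then δ else d (i-1) with hd'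
  have hd'mem : ∀ i, d' i ∈ ({0,1,2,4} : Set ℤ) := by
    intro i
    by_cases h0 : i = 0 <;> simp only [hd', h0, if_true, if_false, reduceIte] <;>
      first | exact hδ | exact hd _
  refine ⟨d', hd'mem, ?_⟩
  have h1 : HasSum (fun n : ℕ => (d' (n+1) : ℝ) • ((toR A)⁻¹ ^ (n + 2)).mulVec (vecR v))
      ((toR A)⁻¹.mulVec x) := by
    have h := hs.mapL (LB ((toR A)⁻¹))
    have he : (fun n : ℕ => LB ((toR A)⁻¹)
          ((d n : ℝ) • ((toR A)⁻¹ ^ (n + 1)).mulVec (vecR v)))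
        = fun n : ℕ => (d' (n+1) : ℝ) • ((toR A)⁻¹ ^ (n + 2)).mulVec (vecR v) := by
      funext n
      rw [_root_.map_smul, LB_apply, Matrix.mulVec_mulVec, ← pow_succ']
      simp [hd']
    rw [he] at h
    simpa using h
  have h1' : HasSum (fun n : ℕ => (d' (n+1) : ℝ) • ((toR A)⁻¹ ^ (n + 1 + 1)).mulVec (vecR v))
      ((toR A)⁻¹.mulVec x) := h1
  have h2 := (hasSum_nat_add_iff
    (f := fun i : ℕ => (d' i : ℝ) • ((toR A)⁻¹ ^ (i + 1)).mulVec (vecR v)) 1).mp h1'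
  have h3 : ((toR A)⁻¹.mulVec x) + ∑ i ∈ Finset.range 1,
      (d' i : ℝ) • ((toR A)⁻¹ ^ (i + 1)).mulVec (vecR v) = Fmap A v δ x := by
    simp [hd', Fmap, pow_one]
  rw [h3] at h2
  exact h2

lemma decomp (hchar : A.charpoly = X ^ 2 + C 4 * X + C 4) {x : Fin 2 → ℝ}
    (hx : x ∈ attractor A {0,1,2,4} v) :
    ∃ δ ∈ ({0,1,2,4} : Set ℤ), ∃ y ∈ attractor A {0,1,2,4} v, x = Fmap A v δ y := by
  obtain ⟨d, hd, hs⟩ := hx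
  have hysum := (summable_digits A v hchar (fun n => d (n+1))
    (fun n => bound_of_mem (hd (n+1)))).hasSum
  set y := ∑' n : ℕ, (d (n+1) : ℝ) • ((toR A)⁻¹ ^ (n + 1)).mulVec (vecR v) with hy
  refine ⟨d 0, hd 0, y, mem_of_digits A v hchar _ (fun n => hd (n+1)), ?_⟩
  have h1 := hysum.mapL (LB ((toR A)⁻¹))
  have he : (fun n : ℕ => LB ((toR A)⁻¹)
        ((d (n+1) : ℝ) • ((toR A)⁻¹ ^ (n + 1)).mulVec (vecR v)))
      = fun n : ℕ => (d (n+1) : ℝ) • ((toR A)⁻¹ ^ (n + 1 + 1)).mulVec (vecR v) := by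
    funext n
    rw [_root_.map_smul, LB_apply, Matrix.mulVec_mulVec, ← pow_succ']
  rw [he] at h1
  have h2 := (hasSum_nat_add_iff
    (f := fun i : ℕ => (d i : ℝ) • ((toR A)⁻¹ ^ (i + 1)).mulVec (vecR v)) 1).mp h1
  have := hs.unique h2
  rw [this]
  simp [Fmap, pow_one]

/-- `ε`-chains whose steps lie in `B^n (K - K)`. -/
def Rel (n : ℕ) (x y : Fin 2 → ℝ) : Prop :=
  ∃ (k : ℕ) (c : ℕ → Fin 2 → ℝ), c 0 = x ∧ c k = y ∧
    (∀ s, s ≤ k → c s ∈ attractor A {0,1,2,4} v) ∧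
    ∀ s, s < k → ∃ z ∈ attractor A {0,1,2,4} v - attractor A {0,1,2,4} v,
      c (s+1) - c s = ((toR A)⁻¹ ^ n).mulVec z

lemma Rel.single {n : ℕ} {x y : Fin 2 → ℝ} (hx : x ∈ attractor A {0,1,2,4} v)
    (hy : y ∈ attractor A {0,1,2,4} v)
    {z : Fin 2 → ℝ} (hz : z ∈ attractor A {0,1,2,4} v - attractor A {0,1,2,4} v)
    (he : y - x = ((toR A)⁻¹ ^ n).mulVec z) : Rel A v n x y := by
  refine ⟨1, fun s => if s = 0 then x else y, by simp, by simp, ?_, ?_⟩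
  · intro s hs
    interval_cases s <;> simp [hx, hy]
  · intro s hs
    interval_cases s
    exact ⟨z, hz, by simpa using he⟩

lemma Rel.trans {n : ℕ} {x y w : Fin 2 → ℝ} (h1 : Rel A v n x y) (h2 : Rel A v n y w) :
    Rel A v n x w := by
  obtain ⟨k, c, hc0, hck, hcmem, hcstep⟩ := h1
  obtain ⟨k', c', hc'0, hc'k, hc'mem, hc'step⟩ := h2
  have hcc : ∀ s, k ≤ s → (if s ≤ k then c s else c' (s - k)) = c' (s - k) := by
    intro s hsk
    by_cases h2 : s ≤ k
    · have h3 : s = k := le_antisymm h2 hsk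
      subst h3
      simp only [le_refl, if_true, Nat.sub_self, hc'0, hck]
    · simp [h2]
  refine ⟨k + k', fun s => if s ≤ k then c s else c' (s - k),
    by simp only [Nat.zero_le, if_true, hc0], ?_, ?_, ?_⟩
  · show (if k + k' ≤ k then c (k + k') else c' (k + k' - k)) = w
    rw [hcc (k + k') (by omega), show k + k' - k = k' from by omega]
    exact hc'k
  · intro s hs
    by_cases h : s ≤ k
    · simp only [h, if_true]; exact hcmem s h
    · simp only [h, if_false]; exact hc'mem (s - k) (by omega)
  · intro s hs
    by_cases h : s + 1 ≤ k
    · show ∃ z ∈ _, (if s + 1 ≤ k then c (s+1) else c' (s + 1 - k)) -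
        (if s ≤ k then c s else c' (s - k)) = _
      simp only [show s ≤ k from by omega, h, if_true]
      exact hcstep s (by omega)
    · show ∃ z ∈ _, (if s + 1 ≤ k then c (s+1) else c' (s + 1 - k)) -
        (if s ≤ k then c s else c' (s - k)) = _
      simp only [h, if_false]
      rw [hcc s (by omega), show s + 1 - k = (s - k) + 1 from by omega]
      exact hc'step (s - k) (by omega)

lemma Rel.symm {n : ℕ} {x y : Fin 2 → ℝ} (h : Rel A v n x y) : Rel A v n y x := by
  obtain ⟨k, c, hc0, hck, hcmem, hcstep⟩ := h
  refine ⟨k, fun s => c (k - s), by simp [hck], by simp [hc0], ?_, ?_⟩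
  · intro s hs
    exact hcmem (k - s) (by omega)
  · intro s hs
    obtain ⟨z, hz, he⟩ := hcstep (k - s - 1) (by omega)
    obtain ⟨a, ha, b, hb, rfl⟩ := Set.mem_sub.mp hz
    refine ⟨b - a, Set.mem_sub.mpr ⟨b, hb, a, ha, rfl⟩, ?_⟩
    set t := k - s - 1 with ht
    show c (k - (s+1)) - c (k - s) = _
    rw [show k - (s+1) = t from by omega, show k - s = t + 1 from by omega,
      ← neg_sub a b, Matrix.mulVec_neg, ← he]
    abel

lemma Rel.map (hchar : A.charpoly = X ^ 2 + C 4 * X + C 4) {n : ℕ} {x y : Fin 2 → ℝ}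
    (δ : ℤ) (hδ : δ ∈ ({0,1,2,4} : Set ℤ)) (h : Rel A v n x y) :
    Rel A v (n+1) (Fmap A v δ x) (Fmap A v δ y) := by
  obtain ⟨k, c, hc0, hck, hcmem, hcstep⟩ := h
  refine ⟨k, fun s => Fmap A v δ (c s), by simp only [hc0], by simp only [hck], ?_, ?_⟩
  · intro s hs
    exact Fmap_mem A v hchar δ hδ (hcmem s hs)
  · intro s hs
    obtain ⟨z, hz, he⟩ := hcstep s hs
    refine ⟨z, hz, ?_⟩
    have h1 : Fmap A v δ (c (s+1)) - Fmap A v δ (c s)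
        = (toR A)⁻¹.mulVec (c (s+1) - c s) := by
      simp only [Fmap]
      rw [show (toR A)⁻¹.mulVec (c (s+1) - c s)
          = (toR A)⁻¹.mulVecLin (c (s+1) - c s) from rfl, map_sub]
      simp only [Matrix.mulVecLin_apply]
      abel
    rw [h1, he, Matrix.mulVec_mulVec, ← pow_succ']


lemma overlap01 (hchar : A.charpoly = X ^ 2 + C 4 * X + C 4) :
    ∃ s ∈ attractor A {0,1,2,4} v, ∃ t ∈ attractor A {0,1,2,4} v,
      Fmap A v 1 s = Fmap A v 0 t ∧ Fmap A v 2 s = Fmap A v 1 t := by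
  obtain ⟨t, ht, s, hs, hts⟩ := Set.mem_sub.mp (mem1 A v hchar)
  have hteq : t = vecR v + s := by rw [← sub_eq_iff_eq_add] at *; exact hts
  refine ⟨s, hs, t, ht, ?_, ?_⟩ <;>
  · simp only [Fmap, hteq, Matrix.mulVec_add]
    push_cast
    module

lemma overlap24 (hchar : A.charpoly = X ^ 2 + C 4 * X + C 4) :
    ∃ s ∈ attractor A {0,1,2,4} v, ∃ t ∈ attractor A {0,1,2,4} v,
      Fmap A v 4 s = Fmap A v 2 t := by
  obtain ⟨t, ht, s, hs, hts⟩ := Set.mem_sub.mp (mem2 A v hchar)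
  have hteq : t = (2:ℝ) • vecR v + s := by rw [← sub_eq_iff_eq_add] at *; exact hts
  refine ⟨s, hs, t, ht, ?_⟩
  simp only [Fmap, hteq, Matrix.mulVec_add, Matrix.mulVec_smul]
  push_cast
  module

lemma mem0D : (0:ℤ) ∈ ({0,1,2,4} : Set ℤ) := by simp
lemma mem1D : (1:ℤ) ∈ ({0,1,2,4} : Set ℤ) := by simp
lemma mem2D : (2:ℤ) ∈ ({0,1,2,4} : Set ℤ) := by simp
lemma mem4D : (4:ℤ) ∈ ({0,1,2,4} : Set ℤ) := by simp

lemma chain (hchar : A.charpoly = X ^ 2 + C 4 * X + C 4) :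
    ∀ n : ℕ, ∀ x ∈ attractor A {0,1,2,4} v, ∀ y ∈ attractor A {0,1,2,4} v,
      Rel A v n x y := by
  intro n
  induction n with
  | zero =>
      intro x hx y hy
      exact Rel.single A v hx hy (Set.mem_sub.mpr ⟨y, hy, x, hx, rfl⟩)
        (by rw [pow_zero, Matrix.one_mulVec])
  | succ n IH =>
      intro x hx y hy
      obtain ⟨s01, hs01, t01, ht01, h01a, h01b⟩ := overlap01 A v hchar
      obtain ⟨s24, hs24, t24, ht24, h24⟩ := overlap24 A v hchar
      have reach : ∀ δ ∈ ({0,1,2,4} : Set ℤ), ∀ a ∈ attractor A {0,1,2,4} v,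
          Rel A v (n+1) (Fmap A v δ a) (Fmap A v 1 t01) := by
        intro δ hδ a ha
        simp only [Set.mem_insert_iff, Set.mem_singleton_iff] at hδ
        rcases hδ with rfl | rfl | rfl | rfl
        · have r1 := Rel.map A v hchar 0 mem0D (IH a ha t01 ht01)
          rw [← h01a] at r1
          exact Rel.trans A v r1 (Rel.map A v hchar 1 mem1D (IH s01 hs01 t01 ht01))
        · exact Rel.map A v hchar 1 mem1D (IH a ha t01 ht01)
        · have r1 := Rel.map A v hchar 2 mem2D (IH a ha s01 hs01)
          rw [h01b] at r1
          exact r1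
        · have r1 := Rel.map A v hchar 4 mem4D (IH a ha s24 hs24)
          rw [h24] at r1
          have r2 := Rel.map A v hchar 2 mem2D (IH t24 ht24 s01 hs01)
          rw [h01b] at r2
          exact Rel.trans A v r1 r2
      obtain ⟨δx, hδx, x', hx', hxe⟩ := decomp A v hchar hx
      obtain ⟨δy, hδy, y', hy', hye⟩ := decomp A v hchar hy
      rw [hxe, hye]
      exact Rel.trans A v (reach δx hδx x' hx') (Rel.symm A v (reach δy hδy y' hy'))

lemma K_connected (hchar : A.charpoly = X ^ 2 + C 4 * X + C 4) :
    IsConnected (attractor A {0,1,2,4} v) := by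
  refine ⟨K_nonempty A v, ?_⟩
  rw [isPreconnected_iff_subset_of_fully_disjoint_closed (K_compact A v hchar).isClosed]
  intro u₁ u₂ hu₁ hu₂ hsub hdisj
  by_contra hcon
  push_neg at hcon
  obtain ⟨hnu, hnw⟩ := hcon
  obtain ⟨y, hyK, hyu⟩ := Set.not_subset.mp hnu
  obtain ⟨x, hxK, hxw⟩ := Set.not_subset.mp hnw
  have hyw : y ∈ u₂ := (hsub hyK).resolve_left hyu
  have hxu : x ∈ u₁ := (hsub hxK).resolve_right hxw
  have hKcomp := K_compact A v hchar
  have hKu : IsCompact (attractor A {0,1,2,4} v ∩ u₁) := hKcomp.inter_right hu₁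
  have hKw : IsCompact (attractor A {0,1,2,4} v ∩ u₂) := hKcomp.inter_right hu₂
  have hKune : (attractor A {0,1,2,4} v ∩ u₁).Nonempty := ⟨x, hxK, hxu⟩
  have hKwne : (attractor A {0,1,2,4} v ∩ u₂).Nonempty := ⟨y, hyK, hyw⟩
  have hcont : Continuous (fun p : Fin 2 → ℝ =>
      Metric.infDist p (attractor A {0,1,2,4} v ∩ u₂)) := Metric.continuous_infDist_pt _
  obtain ⟨p0, hp0Ku, hp0min⟩ := hKu.exists_isMinOn hKune hcont.continuousOn
  have hδpos : 0 < Metric.infDist p0 (attractor A {0,1,2,4} v ∩ u₂) := by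
    apply (IsClosed.notMem_iff_infDist_pos hKw.isClosed hKwne).mp
    intro hmem
    exact Set.disjoint_left.mp hdisj hp0Ku.2 hmem.2
  set δ := Metric.infDist p0 (attractor A {0,1,2,4} v ∩ u₂) with hδdef
  have hdistlb : ∀ p ∈ attractor A {0,1,2,4} v ∩ u₁,
      ∀ q ∈ attractor A {0,1,2,4} v ∩ u₂, δ ≤ dist p q := fun p hp q hq =>
    le_trans (hp0min hp) (Metric.infDist_le_dist_of_mem hq)
  have hKK : IsCompact (attractor A {0,1,2,4} v - attractor A {0,1,2,4} v) := by
    have he : (attractor A {0,1,2,4} v - attractor A {0,1,2,4} v)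
        = (fun p : (Fin 2 → ℝ) × (Fin 2 → ℝ) => p.1 - p.2) ''
            ((attractor A {0,1,2,4} v) ×ˢ (attractor A {0,1,2,4} v)) := by
      ext z
      constructor
      · rintro ⟨a, ha, b, hb, rfl⟩
        exact ⟨(a, b), ⟨ha, hb⟩, rfl⟩
      · rintro ⟨⟨a, b⟩, ⟨ha, hb⟩, rfl⟩
        exact ⟨a, ha, b, hb, rfl⟩
    rw [he]
    exact (hKcomp.prod hKcomp).image (continuous_fst.sub continuous_snd)
  obtain ⟨R, hR⟩ := hKK.isBounded.exists_norm_le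
  have hNcont : Continuous ((NN A).mulVec) := by
    have : ((NN A).mulVec) = fun z => LB (NN A) z := by funext z; rw [LB_apply]
    rw [this]
    exact (LB (NN A)).continuous
  obtain ⟨R2, hR2⟩ := ((hKK.image hNcont).isBounded).exists_norm_le
  have htend := (summable_bound R R2).tendsto_atTop_zero
  obtain ⟨n, hn⟩ := (htend.eventually_lt_const hδpos).exists
  obtain ⟨k, c, hc0, hck, hcmem, hcstep⟩ := chain A v hchar (n+1) x hxK y hyK
  have hstep : ∀ s, s < k → dist (c s) (c (s+1)) < δ := by
    intro s hs
    obtain ⟨z, hz, he⟩ := hcstep s hs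
    rw [dist_eq_norm, norm_sub_rev, he]
    calc ‖((toR A)⁻¹ ^ (n+1)).mulVec z‖
        ≤ (1/2:ℝ)^(n+1) * ‖z‖ + (((n:ℝ)+1)/2 * (1/2)^(n+1)) * ‖(NN A).mulVec z‖ :=
          normB A hchar n z
      _ ≤ (1/2:ℝ)^(n+1) * R + (((n:ℝ)+1)/2 * (1/2)^(n+1)) * R2 := by
          apply add_le_add
          · exact mul_le_mul_of_nonneg_left (hR z hz) (by positivity)
          · exact mul_le_mul_of_nonneg_left (hR2 _ ⟨z, hz, rfl⟩) (by positivity)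
      _ < δ := hn
  have hallu : ∀ s, s ≤ k → c s ∈ u₁ := by
    intro s
    induction s with
    | zero => intro _; rw [hc0]; exact hxu
    | succ s ihs =>
        intro hsk
        have hcsu : c s ∈ u₁ := ihs (by omega)
        have hcs1K : c (s+1) ∈ attractor A {0,1,2,4} v := hcmem (s+1) hsk
        rcases hsub hcs1K with h | h
        · exact h
        · exfalso
          have h1 : c s ∈ attractor A {0,1,2,4} v ∩ u₁ := ⟨hcmem s (by omega), hcsu⟩
          have h2 : c (s+1) ∈ attractor A {0,1,2,4} v ∩ u₂ := ⟨hcs1K, h⟩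
          exact absurd (hdistlb _ h1 _ h2) (not_le.mpr (hstep s (by omega)))
  have hyu1 : y ∈ u₁ := hck ▸ hallu k le_rfl
  exact Set.disjoint_left.mp hdisj hyu1 hyw

end S16

/-- for characteristic polynomial `x² + 4x + 4` and digit set
`{0, 1, 2, 4} v`: `v = -2A⁻¹v + 2A⁻²v + 2A⁻³v - 2A⁻⁴v + 2A⁻⁵v - 2A⁻⁶v + ⋯ ∈ T - T`
and `2v = -4A⁻¹v + 4A⁻²v + 4A⁻³v - 4A⁻⁴v + 4A⁻⁵v - 4A⁻⁶v + ⋯ ∈ T - T`, so `T` is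
connected. (The summation index `i : ℕ` corresponds to the power `A^{-(i+1)}`; the
coefficient of `A^{-(i+1)}` is `-2, 2, 2, -2, 2, -2, …`, i.e. `2·(-1)^i` for `i ≥ 2`.) -/


theorem stmt16 (A : Matrix (Fin 2) (Fin 2) ℤ)
    (hA : IsExpanding A)
    (hchar : A.charpoly = X ^ 2 + C 4 * X + C 4)
    (v : Fin 2 → ℤ)
    (hv : LinearIndependent ℝ ![vecR v, (toR A).mulVec (vecR v)]) :
    HasSum (fun i : ℕ =>
        (if i = 0 then (-2 : ℝ) else if i = 1 then 2 else 2 * (-1 : ℝ) ^ i) •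
          ((toR A)⁻¹ ^ (i + 1)).mulVec (vecR v)) (vecR v) ∧
    HasSum (fun i : ℕ =>
        (if i = 0 then (-4 : ℝ) else if i = 1 then 4 else 4 * (-1 : ℝ) ^ i) •
          ((toR A)⁻¹ ^ (i + 1)).mulVec (vecR v)) ((2 : ℝ) • vecR v) ∧
    vecR v ∈
      attractor A {0, 1, 2, 4} v - attractor A {0, 1, 2, 4} v ∧
    (2 : ℝ) • vecR v ∈
      attractor A {0, 1, 2, 4} v - attractor A {0, 1, 2, 4} v ∧
    IsConnected (attractor A {0, 1, 2, 4} v) :=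
  ⟨S16.hsum1 A v hchar, S16.hsum2 A v hchar, S16.mem1 A v hchar, S16.mem2 A v hchar,
    S16.K_connected A v hchar⟩
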